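/- For every n ≥ 3 there exists a coloring model on n vertices with at most 2 colors per vertex such that in the induced random graph distribution every unordered pair e of distinct vertices has marginal probability Pr[X_e] = 1/4, and the sampled graph is disconnected with probability 1. -/

import Mathlib

open scoped Classical

structure ColoringModel (n : ℕ) where
  Ω : Fin n → Type
  fin : ∀ v, Fintype (Ω v)
  p : ∀ v, Ω v → ℝ
  nonneg : ∀ v ω, 0 ≤ p v ω
  sum_one : ∀ v, ∑ ω ∈ @Finset.univ (Ω v) (fin v), p v ω = 1
  f : ∀ u v : Fin n, Ω u → Ω v → Bool
  symm : ∀ u v x y, f u v x y = f v u y x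

def ColoringModel.graph {n : ℕ} (M : ColoringModel n) (ω : ∀ v, M.Ω v) :
    SimpleGraph (Fin n) where
  Adj u v := u ≠ v ∧ M.f u v (ω u) (ω v) = true
  symm := ⟨by
    rintro u v ⟨h1, h2⟩
    refine ⟨h1.symm, ?_⟩
    rw [M.symm]
    exact h2⟩
  loopless := ⟨fun u h => h.1 rfl⟩

noncomputable def ColoringModel.pr {n : ℕ} (M : ColoringModel n)
    (P : SimpleGraph (Fin n) → Prop) : ℝ :=
  letI := M.fin
  ∑ ω : (∀ v, M.Ω v), if P (M.graph ω) then ∏ v, M.p v (ω v) else 0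

noncomputable def ColoringModel.dist {n : ℕ} (M : ColoringModel n)
    (G : SimpleGraph (Fin n)) : ℝ :=
  M.pr (fun H => H = G)

def TCbase (n : ℕ) (u v : Fin n) (x y : Bool) : Bool :=
  if u.val = 0 then (if v.val = n - 1 then x && !y else !x && !y) else x && y

def TCf (n : ℕ) (u v : Fin n) (x y : Bool) : Bool :=
  if u < v then TCbase n u v x y else if v < u then TCbase n v u y x else false

noncomputable def TCM (n : ℕ) : ColoringModel n where
  Ω _ := Bool
  fin _ := inferInstance
  p _ _ := 1/2
  nonneg := by intro v ω; norm_num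
  sum_one := by intro v; simp
  f := TCf n
  symm := by
    intro u v x y
    unfold TCf
    rcases lt_trichotomy u v with h | h | h
    · rw [if_pos h, if_neg (asymm h), if_pos h]
    · simp [h, lt_irrefl]
    · rw [if_neg (asymm h), if_pos h, if_pos h]

lemma TCf_iff (n : ℕ) (u v : Fin n) (huv : u < v) :
    ∃ a b : Bool, ∀ x y, (TCf n u v x y = true ↔ (x = a ∧ y = b)) := by
  by_cases h0 : u.val = 0
  · by_cases hl : v.val = n - 1
    · exact ⟨true, false, by
        intro x y; unfold TCf TCbase; rw [if_pos huv, if_pos h0, if_pos hl]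
        cases x <;> cases y <;> simp⟩
    · exact ⟨false, false, by
        intro x y; unfold TCf TCbase; rw [if_pos huv, if_pos h0, if_neg hl]
        cases x <;> cases y <;> simp⟩
  · exact ⟨true, true, by
      intro x y; unfold TCf TCbase; rw [if_pos huv, if_neg h0]
      cases x <;> cases y <;> simp⟩

lemma adj_elim {n : ℕ} (ω : Fin n → Bool) {a b : Fin n}
    (h : ((TCM n).graph ω).Adj a b) :
    (a < b ∧ TCbase n a b (ω a) (ω b) = true) ∨
    (b < a ∧ TCbase n b a (ω b) (ω a) = true) := by
  obtain ⟨hne, hf⟩ : a ≠ b ∧ (TCM n).f a b (ω a) (ω b) = true := h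
  unfold TCM TCf at hf
  simp only at hf
  rcases lt_trichotomy a b with h | h | h
  · left; refine ⟨h, ?_⟩; rwa [if_pos h] at hf
  · exact absurd h hne
  · right; refine ⟨h, ?_⟩; rwa [if_neg (asymm h), if_pos h] at hf

lemma walk_prop {V : Type*} {G : SimpleGraph V} (Q : V → Prop)
    (h : ∀ a b, G.Adj a b → Q a → Q b) :
    ∀ {u v : V}, G.Walk u v → Q u → Q v := by
  intro u v w
  induction w with
  | nil => exact id
  | cons ha _ ih => exact fun hu => ih (h _ _ ha hu)

lemma TCM_disconnected {n : ℕ} (hn : 3 ≤ n) (ω : Fin n → Bool) :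
    ¬ ((TCM n).graph ω).Connected := by
  intro hcon
  set G := (TCM n).graph ω with hG
  have hz : 0 < n := by omega
  have hl' : n - 1 < n := by omega
  have h1' : 1 < n := by omega
  set z : Fin n := ⟨0, hz⟩ with hzdef
  set l : Fin n := ⟨n - 1, hl'⟩ with hldef
  set w1 : Fin n := ⟨1, h1'⟩ with hw1def
  have hzl : z ≠ l := by
    intro h; apply_fun Fin.val at h; simp [hzdef, hldef] at h; omega
  have hzw : z ≠ w1 := by
    intro h; apply_fun Fin.val at h; simp [hzdef, hw1def] at h
  have hwl : w1 ≠ l := by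
    intro h; apply_fun Fin.val at h; simp [hw1def, hldef] at h; omega
  -- helper facts about vals
  rcases hωz : ω z with _ | _ <;> rcases hωl : ω l with _ | _
  · -- ω z = false, ω l = false : l is isolated
    have inv : ∀ a b, G.Adj a b → a ≠ l → b ≠ l := by
      intro a b hadj ha hb
      subst hb
      rcases adj_elim ω hadj with ⟨hlt, hbase⟩ | ⟨hlt, hbase⟩
      · -- a < l
        unfold TCbase at hbase
        split_ifs at hbase with h0 hvl
        · -- a.val = 0 : a = z, x && !y with y = ω l = false, x = ω a = ω z = false
          have haz : a = z := by apply Fin.ext; simpa using h0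
          rw [haz, hωz, hωl] at hbase; simp at hbase
        · simp [hldef] at hvl
        · rw [hωl] at hbase; simp at hbase
      · rw [Fin.lt_def] at hlt; simp [hldef] at hlt; omega
    obtain ⟨wk⟩ := hcon.preconnected z l
    exact (walk_prop _ inv wk hzl) rfl
  · -- ω z = false, ω l = true : cut between falses∪{z} and trues∪{l}
    have inv : ∀ a b, G.Adj a b → (ω a = false ∧ a ≠ l) → (ω b = false ∧ b ≠ l) := by
      intro a b hadj ⟨ha, hal⟩
      rcases adj_elim ω hadj with ⟨hlt, hbase⟩ | ⟨hlt, hbase⟩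
      · unfold TCbase at hbase
        split_ifs at hbase with h0 hvl
        · -- a = z, b = l : x && !y with x = ω z = false
          have haz : a = z := by apply Fin.ext; simpa using h0
          rw [haz, hωz] at hbase; simp at hbase
        · rw [ha] at hbase; simp at hbase
          refine ⟨hbase, ?_⟩
          intro h; subst h; simp [hldef] at hvl
        · rw [ha] at hbase; simp at hbase
      · -- b < a
        unfold TCbase at hbase
        split_ifs at hbase with h0 hvl
        · -- b = z, a = l : excluded since a ≠ l
          exact absurd (by apply Fin.ext; simpa [hldef] using hvl) hal
        · rw [ha] at hbase; simp at hbase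
          have hbz : b = z := by apply Fin.ext; simpa using h0
          exact ⟨hbase, by rw [hbz]; exact hzl⟩
        · rw [ha] at hbase; simp at hbase
    obtain ⟨wk⟩ := hcon.preconnected z l
    exact (walk_prop _ inv wk ⟨hωz, hzl⟩).2 rfl
  · -- ω z = true, ω l = false : component of z is {z, l}
    have inv : ∀ a b, G.Adj a b → (a = z ∨ a = l) → (b = z ∨ b = l) := by
      intro a b hadj ha
      by_contra hb
      push_neg at hb
      obtain ⟨hbz, hbl⟩ := hb
      have hb0 : b.val ≠ 0 := fun h => hbz (Fin.ext (by simpa using h))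
      have hbn : b.val ≠ n - 1 := fun h => hbl (Fin.ext (by simpa [hldef] using h))
      rcases ha with ha | ha <;> subst ha <;>
        rcases adj_elim ω hadj with ⟨hlt, hbase⟩ | ⟨hlt, hbase⟩
      · -- z < b
        unfold TCbase at hbase
        rw [if_pos (by simp [hzdef]), if_neg hbn, hωz] at hbase
        simp at hbase
      · -- b < z : impossible
        have := hlt
        rw [Fin.lt_def] at this; simp [hzdef] at this
      · -- l < b : impossible since l is max... b.val < n, b.val ≠ n-1 so b.val < n - 1
        rw [Fin.lt_def] at hlt; simp [hldef] at hlt; omega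
      · -- b < l, base b l (ω b) (ω l), b.val ≠ 0 : ω b && ω l with ω l = false
        unfold TCbase at hbase
        rw [if_neg hb0, hωl] at hbase
        simp at hbase
    obtain ⟨wk⟩ := hcon.preconnected z w1
    rcases walk_prop _ inv wk (Or.inl rfl) with h | h
    · exact hzw h.symm
    · exact hwl h
  · -- ω z = true, ω l = true : z isolated
    have inv : ∀ a b, G.Adj a b → a ≠ z → b ≠ z := by
      intro a b hadj ha hb
      subst hb
      rcases adj_elim ω hadj with ⟨hlt, hbase⟩ | ⟨hlt, hbase⟩
      · rw [Fin.lt_def] at hlt; simp [hzdef] at hlt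
      · -- z < a, base z a (ω z) (ω a)
        unfold TCbase at hbase
        rw [if_pos (by simp [hzdef]), hωz] at hbase
        split_ifs at hbase with hvl
        · rw [show a = l from Fin.ext (by simpa [hldef] using hvl), hωl] at hbase
          simp at hbase
        · simp at hbase
    obtain ⟨wk⟩ := hcon.preconnected w1 z
    exact (walk_prop _ inv wk hzw.symm) rfl

lemma TCM_pr_const {n : ℕ} (P : SimpleGraph (Fin n) → Prop)
    (hP : ∀ ω : Fin n → Bool, P ((TCM n).graph ω)) : (TCM n).pr P = 1 := by
  unfold ColoringModel.pr
  show (∑ ω : Fin n → Bool, if P ((TCM n).graph ω) then ∏ v, (TCM n).p v (ω v) else 0) = 1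
  have : ∀ ω : Fin n → Bool,
      (if P ((TCM n).graph ω) then ∏ v, (TCM n).p v (ω v) else 0)
        = ∏ v : Fin n, ((1:ℝ)/2) := by
    intro ω
    rw [if_pos (hP ω)]
    rfl
  rw [Finset.sum_congr rfl (fun ω _ => this ω)]
  rw [Finset.sum_const, Finset.prod_const]
  simp [Finset.card_univ]

lemma TCM_pr_adj {n : ℕ} (u v : Fin n) (huv : u < v) :
    (TCM n).pr (fun G => G.Adj u v) = 1 / 4 := by
  obtain ⟨a, b, hab⟩ := TCf_iff n u v huv
  set h : Fin n → Bool → ℝ := fun w x =>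
    if w = u then (if x = a then 1/2 else 0)
    else if w = v then (if x = b then 1/2 else 0) else 1/2 with hdef
  unfold ColoringModel.pr
  show (∑ ω : Fin n → Bool,
      if ((TCM n).graph ω).Adj u v then ∏ w, (TCM n).p w (ω w) else 0) = 1 / 4
  have key : ∀ ω : Fin n → Bool,
      (if ((TCM n).graph ω).Adj u v then ∏ w, (TCM n).p w (ω w) else 0)
        = ∏ w : Fin n, h w (ω w) := by
    intro ω
    by_cases hc : ω u = a ∧ ω v = b
    · rw [if_pos (show ((TCM n).graph ω).Adj u v from (⟨huv.ne, (hab _ _).mpr hc⟩ : u ≠ v ∧ (TCM n).f u v (ω u) (ω v) = true))]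
      apply Finset.prod_congr rfl
      intro w _
      show (1:ℝ)/2 = h w (ω w)
      rcases eq_or_ne w u with rfl | hwu
      · simp [hdef, hc.1]
      · rcases eq_or_ne w v with rfl | hwv
        · simp [hdef, hwu, hc.2]
        · simp [hdef, hwu, hwv]
    · rw [if_neg (fun (hadj : ((TCM n).graph ω).Adj u v) => hc ((hab _ _).mp (show u ≠ v ∧ (TCM n).f u v (ω u) (ω v) = true from hadj).2))]
      symm
      rcases not_and_or.mp hc with h1 | h2
      · exact Finset.prod_eq_zero (Finset.mem_univ u) (by simp [hdef, h1])
      · exact Finset.prod_eq_zero (Finset.mem_univ v) (by simp [hdef, huv.ne', h2])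
  rw [Finset.sum_congr rfl (fun ω _ => key ω), ← Fintype.prod_sum]
  have hqu : (∑ x : Bool, h u x) = 1/2 := by cases a <;> simp [hdef]
  have hqv : (∑ x : Bool, h v x) = 1/2 := by cases b <;> simp [hdef, huv.ne']
  have hmem : v ∈ Finset.univ.erase u := Finset.mem_erase.mpr ⟨huv.ne', Finset.mem_univ v⟩
  rw [← Finset.mul_prod_erase _ _ (Finset.mem_univ u), ← Finset.mul_prod_erase _ _ hmem]
  rw [Finset.prod_eq_one, hqu, hqv]
  · norm_num
  · intro w hw
    obtain ⟨hwv, hw2⟩ := Finset.mem_erase.mp hw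
    obtain ⟨hwu, _⟩ := Finset.mem_erase.mp hw2
    have : ∀ x : Bool, h w x = 1/2 := fun x => by simp [hdef, hwu, hwv]
    simp [this]

theorem two_color_lower_bound (n : ℕ) (hn : 3 ≤ n) :
    ∃ M : ColoringModel n, (∀ v, Nat.card (M.Ω v) ≤ 2) ∧
      (∀ u v : Fin n, u ≠ v → M.pr (fun G => G.Adj u v) = 1 / 4) ∧
      M.pr (fun G => ¬ G.Connected) = 1 := by
  refine ⟨TCM n, ?_, ?_, ?_⟩
  · intro v; simp [TCM]
  · intro u v huv
    rcases huv.lt_or_gt with h | h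
    · exact TCM_pr_adj u v h
    · have : (fun G : SimpleGraph (Fin n) => G.Adj u v) = fun G => G.Adj v u := by
        funext G; exact propext ⟨fun hh => hh.symm, fun hh => hh.symm⟩
      rw [show ((TCM n).pr fun G => G.Adj u v) = ((TCM n).pr fun G => G.Adj v u) from by rw [this]]
      exact TCM_pr_adj v u h
  · exact TCM_pr_const _ (fun ω => TCM_disconnected hn ω)
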